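/- Let A be a countable alphabet, P a probability distribution on A, and D a proper and almost surely complete dictionary over A. Then for every positive integer m, -∑_{α∈D, |α|≥m} P(α) log₂ P(α) ≥ -∑_{β ∈ D_m^⊥} P(β) log₂ P(β), where D_m^⊥ = {α ∈ D : |α| = m} ∪ T_m and T_m = {α ∈ A^m : no β ∈ D is a prefix of α}, with all sums taken in [0,∞]. -/

import Mathlib

open scoped ENNReal
open Filter

/-- The probability of a finite string, obtained by extending the
distribution `P` multiplicatively: `P(a₁⋯aₙ) = ∏ᵢ P(aᵢ)`. -/
noncomputable def strProb {A : Type*} (P : PMF A) (l : List A) : ℝ≥0∞ :=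
  (l.map fun a => P a).prod

/-- A dictionary is a set of nonempty finite strings. -/
def IsDictionary {A : Type*} (D : Set (List A)) : Prop :=
  ∀ α ∈ D, α ≠ []

/-- A dictionary is proper if no string in it is a (proper) prefix of
another string in it. -/
def IsProper {A : Type*} (D : Set (List A)) : Prop :=
  ∀ α ∈ D, ∀ β ∈ D, α <+: β → α = β

/-- A dictionary is complete if every infinite sequence over `A` has a
prefix in it. -/
def IsCompleteDict {A : Type*} (D : Set (List A)) : Prop :=
  ∀ x : ℕ → A, ∃ α ∈ D, α = (List.range α.length).map x

/-- The probability that the length-`n` prefix of a random infinite sequence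
has some prefix belonging to `D`. -/
noncomputable def prefixProb {A : Type*} (P : PMF A) (D : Set (List A)) (n : ℕ) : ℝ≥0∞ :=
  ∑' γ : {γ : List A // γ.length = n ∧ ∃ β ∈ D, β <+: γ}, strProb P γ

/-- `D` is almost surely complete: under the infinite product measure `P^ℕ`,
the event that an infinite sequence has a prefix in `D` has probability `1`.
(By continuity from below, this probability is the limit, as `n → ∞`, of the
probability that the length-`n` prefix has a prefix in `D`.) -/
def IsASC {A : Type*} (P : PMF A) (D : Set (List A)) : Prop :=
  Tendsto (prefixProb P D) atTop (nhds 1)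

/-- `Tset D n` = strings of length `n` having no prefix in `D`. -/
def Tset {A : Type*} (D : Set (List A)) (n : ℕ) : Set (List A) :=
  {α | α.length = n ∧ ∀ β ∈ D, ¬ β <+: α}

/-- `Dperp D n = {α ∈ D : |α| = n} ∪ Tₙ`. -/
def Dperp {A : Type*} (D : Set (List A)) (n : ℕ) : Set (List A) :=
  {α ∈ D | α.length = n} ∪ Tset D n

/-- `Dn D n = {α ∈ D : |α| < n} ∪ Dₙ^⊥`. -/
def Dn {A : Type*} (D : Set (List A)) (n : ℕ) : Set (List A) :=
  {α ∈ D | α.length < n} ∪ Dperp D n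

/-- The one-letter extensions `αA = {αa : a ∈ A}` of a string `α`. -/
def oneExt {A : Type*} (α : List A) : Set (List A) :=
  {l | ∃ a : A, l = α ++ [a]}

/-- The extension `D[α] = (D \ {α}) ∪ αA` of a dictionary at `α`. -/
def extendDict {A : Type*} (D : Set (List A)) (α : List A) : Set (List A) :=
  (D \ {α}) ∪ oneExt α

/-- The nonnegative entropy contribution `-p log₂ p ∈ [0,∞]` of a
probability value `p`. -/
noncomputable def entTerm (p : ℝ≥0∞) : ℝ≥0∞ :=
  ENNReal.ofReal (-(p.toReal * Real.logb 2 p.toReal))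

/-- The entropy `H(E) = -∑_{α∈E} P(α) log₂ P(α)` of a dictionary, in `[0,∞]`. -/
noncomputable def dictEntropy {A : Type*} (P : PMF A) (E : Set (List A)) : ℝ≥0∞ :=
  ∑' α : E, entTerm (strProb P α)

/-- The average length `l̄(E) = ∑_{α∈E} P(α)|α|` of a dictionary, in `[0,∞]`. -/
noncomputable def avgLen {A : Type*} (P : PMF A) (E : Set (List A)) : ℝ≥0∞ :=
  ∑' α : E, strProb P α * (α : List A).length

/-- The source entropy `H(P) = -∑_{a∈A} P(a) log₂ P(a)`, in `[0,∞]`. -/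
noncomputable def srcEntropy {A : Type*} (P : PMF A) : ℝ≥0∞ :=
  ∑' a : A, entTerm (P a)


section AuxProofs

variable {A : Type*} (P : PMF A)

lemma strProb_nil : strProb P [] = 1 := by simp [strProb]

lemma strProb_cons (a : A) (l : List A) : strProb P (a :: l) = P a * strProb P l := by
  simp [strProb]

lemma strProb_append (l l' : List A) :
    strProb P (l ++ l') = strProb P l * strProb P l' := by
  simp [strProb]

lemma strProb_le_one (l : List A) : strProb P l ≤ 1 := by
  induction l with
  | nil => simp [strProb]
  | cons a l ih =>
    rw [strProb_cons]
    exact mul_le_one' (P.coe_le_one a) ih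

lemma strProb_ne_top (l : List A) : strProb P l ≠ ⊤ :=
  (lt_of_le_of_lt (strProb_le_one P l) ENNReal.one_lt_top).ne

lemma strProb_le_of_prefix {l l' : List A} (h : l <+: l') :
    strProb P l' ≤ strProb P l := by
  obtain ⟨t, rfl⟩ := h
  rw [strProb_append]
  exact mul_le_of_le_one_right' (strProb_le_one P t)

/-- Cons as an equivalence between `A × (strings of length k)` and strings of
length `k+1`. -/
def consEquiv (A : Type*) (k : ℕ) :
    A × {γ : List A // γ.length = k} ≃ {γ : List A // γ.length = k + 1} where
  toFun p := ⟨p.1 :: p.2.1, by simp [p.2.2]⟩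
  invFun γ := (γ.1.head (List.ne_nil_of_length_pos (by rw [γ.2]; omega)),
    ⟨γ.1.tail, by simp [γ.2]⟩)
  left_inv p := rfl
  right_inv γ := Subtype.ext (List.cons_head_tail _)

lemma tsum_strProb_len (k : ℕ) :
    ∑' γ : {γ : List A // γ.length = k}, strProb P γ.1 = 1 := by
  induction k with
  | zero =>
    rw [tsum_eq_single (⟨[], rfl⟩ : {γ : List A // γ.length = 0})]
    · exact strProb_nil P
    · rintro ⟨γ, hγ⟩ hne
      exact absurd (Subtype.ext (List.length_eq_zero_iff.mp hγ)) hne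
  | succ k ih =>
    rw [← Equiv.tsum_eq (consEquiv A k) (fun γ => strProb P γ.1)]
    calc ∑' p : A × {γ : List A // γ.length = k}, strProb P ((consEquiv A k p).1)
        = ∑' p : A × {γ : List A // γ.length = k}, P p.1 * strProb P p.2.1 :=
          tsum_congr fun p => strProb_cons P p.1 p.2.1
      _ = ∑' (a : A) (γ : {γ : List A // γ.length = k}), P a * strProb P γ.1 :=
          ENNReal.tsum_prod' 
      _ = ∑' a : A, P a * ∑' γ : {γ : List A // γ.length = k}, strProb P γ.1 := by
          simp [ENNReal.tsum_mul_left]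
      _ = 1 := by
          rw [ih]
          simpa using P.tsum_coe

/-- Appending to a fixed prefix as an equivalence. -/
def appendEquiv (β : List A) (n : ℕ) (h : β.length ≤ n) :
    {δ : List A // δ.length = n - β.length} ≃
      {γ : List A // γ.length = n ∧ β <+: γ} where
  toFun δ := ⟨β ++ δ.1, by
    constructor
    · rw [List.length_append, δ.2]; omega
    · exact List.prefix_append _ _⟩
  invFun γ := ⟨γ.1.drop β.length, by rw [List.length_drop, γ.2.1]⟩
  left_inv δ := Subtype.ext List.drop_left
  right_inv γ := Subtype.ext (by
    show β ++ List.drop β.length γ.1 = γ.1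
    obtain ⟨t, ht⟩ := γ.2.2
    rw [← ht, List.drop_left])

lemma tsum_strProb_ext (β : List A) (n : ℕ) (h : β.length ≤ n) :
    ∑' γ : {γ : List A // γ.length = n ∧ β <+: γ}, strProb P γ.1 = strProb P β := by
  rw [← Equiv.tsum_eq (appendEquiv β n h) (fun γ => strProb P γ.1)]
  calc ∑' δ : {δ : List A // δ.length = n - β.length},
        strProb P ((appendEquiv β n h δ).1)
      = ∑' δ : {δ : List A // δ.length = n - β.length},
          strProb P β * strProb P δ.1 := by
        exact tsum_congr fun δ => by simp [appendEquiv, Equiv.coe_fn_mk, strProb_append]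
    _ = strProb P β * ∑' δ : {δ : List A // δ.length = n - β.length}, strProb P δ.1 :=
        ENNReal.tsum_mul_left
    _ = strProb P β := by rw [tsum_strProb_len, mul_one]

lemma one_eq_prefixProb_add_tsum_Tset (D : Set (List A)) (n : ℕ) :
    prefixProb P D n + ∑' γ : Tset D n, strProb P γ.1 = 1 := by
  classical
  have h1 : prefixProb P D n =
      ∑' γ : List A, ({γ : List A | γ.length = n ∧ ∃ β ∈ D, β <+: γ}).indicator
        (strProb P) γ := tsum_subtype _ _
  have h2 : ∑' γ : Tset D n, strProb P γ.1
      = ∑' γ : List A, (Tset D n).indicator (strProb P) γ := tsum_subtype _ _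
  have h3 : ∑' γ : {γ : List A // γ.length = n}, strProb P γ.1
      = ∑' γ : List A, ({γ : List A | γ.length = n}).indicator (strProb P) γ :=
    tsum_subtype _ _
  rw [h1, h2, ← ENNReal.tsum_add, ← tsum_strProb_len P n, h3]
  refine tsum_congr fun γ => ?_
  by_cases hlen : γ.length = n
  · have hmem : γ ∈ ({γ : List A | γ.length = n} : Set (List A)) := hlen
    by_cases hpre : ∃ β ∈ D, β <+: γ
    · have hnT : γ ∉ Tset D n := by
        rintro ⟨-, hT⟩
        obtain ⟨β, hβ, hp⟩ := hpre
        exact hT β hβ hp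
      have hmem2 : γ ∈ ({γ : List A | γ.length = n ∧ ∃ β ∈ D, β <+: γ} : Set (List A)) :=
        ⟨hlen, hpre⟩
      rw [Set.indicator_of_mem hmem2, Set.indicator_of_notMem hnT,
        Set.indicator_of_mem hmem, add_zero]
    · have hT : γ ∈ Tset D n := ⟨hlen, fun β hβ hp => hpre ⟨β, hβ, hp⟩⟩
      have hnm : γ ∉ ({γ : List A | γ.length = n ∧ ∃ β ∈ D, β <+: γ} : Set (List A)) :=
        fun h => hpre h.2
      rw [Set.indicator_of_notMem hnm, Set.indicator_of_mem hT,
        Set.indicator_of_mem hmem, zero_add]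
  · have hnm1 : γ ∉ ({γ : List A | γ.length = n ∧ ∃ β ∈ D, β <+: γ} : Set (List A)) :=
      fun h => hlen h.1
    have hnm2 : γ ∉ Tset D n := fun h => hlen h.1
    have hnm3 : γ ∉ ({γ : List A | γ.length = n} : Set (List A)) := hlen
    rw [Set.indicator_of_notMem hnm1, Set.indicator_of_notMem hnm2,
      Set.indicator_of_notMem hnm3, add_zero]

lemma tendsto_tsum_Tset_zero (D : Set (List A)) (hasc : IsASC P D) :
    Tendsto (fun n => ∑' γ : Tset D n, strProb P γ.1) atTop (nhds 0) := by
  have h : ∀ n, ∑' γ : Tset D n, strProb P γ.1 = 1 - prefixProb P D n := by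
    intro n
    have hkey := one_eq_prefixProb_add_tsum_Tset P D n
    have ha : prefixProb P D n ≠ ⊤ := by
      have h1 : prefixProb P D n ≤ 1 := le_self_add.trans hkey.le
      exact (lt_of_le_of_lt h1 ENNReal.one_lt_top).ne
    rw [← hkey, ENNReal.add_sub_cancel_left ha]
  have htend : Tendsto (fun n => 1 - prefixProb P D n) atTop (nhds (1 - 1)) :=
    ENNReal.Tendsto.sub tendsto_const_nhds hasc (Or.inl ENNReal.one_ne_top)
  simp only [h]
  simpa using htend

lemma strProb_le_fiber {D : Set (List A)} (hprop : IsProper D) (hasc : IsASC P D)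
    {m : ℕ} {β : List A} (hβ : β ∈ Tset D m) :
    strProb P β ≤
      ∑' α : {α : List A | α ∈ D ∧ m ≤ α.length ∧ β <+: α}, strProb P α.1 := by
  classical
  set S := ∑' α : {α : List A | α ∈ D ∧ m ≤ α.length ∧ β <+: α}, strProb P α.1
    with hS
  have hβlen : β.length = m := hβ.1
  have hstep : ∀ n, m ≤ n →
      strProb P β ≤ (∑' γ : Tset D n, strProb P γ.1) + S := by
    intro n hn
    rw [← tsum_strProb_ext P β n (by omega)]
    -- every length-n extension of β is either in `Tset D n` or has a D-prefix
    have hE' : ∑' γ : {γ : List A | γ.length = n ∧ β <+: γ ∧ ∃ δ ∈ D, δ <+: γ},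
        strProb P γ.1 ≤ S := by
      -- choose the D-prefix; it must extend β
      have hsel : ∀ γ : {γ : List A | γ.length = n ∧ β <+: γ ∧ ∃ δ ∈ D, δ <+: γ},
          ∃ δ : List A, δ ∈ D ∧ m ≤ δ.length ∧ β <+: δ ∧ δ <+: γ.1 := by
        rintro ⟨γ, hγn, hβγ, δ, hδD, hδγ⟩
        refine ⟨δ, hδD, ?_, ?_, hδγ⟩
        · rcases List.prefix_or_prefix_of_prefix hδγ hβγ with h | h
          · exact absurd h (hβ.2 δ hδD)
          · rw [← hβlen]; exact h.length_le
        · rcases List.prefix_or_prefix_of_prefix hδγ hβγ with h | h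
          · exact absurd h (hβ.2 δ hδD)
          · exact h
      let i : {γ : List A | γ.length = n ∧ β <+: γ ∧ ∃ δ ∈ D, δ <+: γ} →
          Σ α : {α : List A | α ∈ D ∧ m ≤ α.length ∧ β <+: α},
            {γ : List A // γ.length = n ∧ α.1 <+: γ} := fun γ =>
        ⟨⟨(hsel γ).choose, (hsel γ).choose_spec.1, (hsel γ).choose_spec.2.1,
          (hsel γ).choose_spec.2.2.1⟩,
         ⟨γ.1, γ.2.1, (hsel γ).choose_spec.2.2.2⟩⟩
      have hinj : Function.Injective i := by
        intro γ₁ γ₂ hEq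
        have := congrArg (fun σ : Σ α : {α : List A | α ∈ D ∧ m ≤ α.length ∧ β <+: α},
            {γ : List A // γ.length = n ∧ α.1 <+: γ} => σ.2.1) hEq
        exact Subtype.ext this
      calc ∑' γ : {γ : List A | γ.length = n ∧ β <+: γ ∧ ∃ δ ∈ D, δ <+: γ},
            strProb P γ.1
          = ∑' γ : {γ : List A | γ.length = n ∧ β <+: γ ∧ ∃ δ ∈ D, δ <+: γ},
              (fun σ : Σ α : {α : List A | α ∈ D ∧ m ≤ α.length ∧ β <+: α},
                {γ : List A // γ.length = n ∧ α.1 <+: γ} => strProb P σ.2.1) (i γ) :=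
            tsum_congr fun γ => rfl
        _ ≤ ∑' σ : Σ α : {α : List A | α ∈ D ∧ m ≤ α.length ∧ β <+: α},
              {γ : List A // γ.length = n ∧ α.1 <+: γ}, strProb P σ.2.1 :=
            ENNReal.tsum_comp_le_tsum_of_injective hinj _
        _ = ∑' α : {α : List A | α ∈ D ∧ m ≤ α.length ∧ β <+: α},
              ∑' γ : {γ : List A // γ.length = n ∧ α.1 <+: γ}, strProb P γ.1 :=
            ENNReal.tsum_sigma' _
        _ ≤ S := by
            refine ENNReal.tsum_le_tsum fun α => ?_
            by_cases hl : α.1.length ≤ n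
            · exact (tsum_strProb_ext P α.1 n hl).le
            · have hempty : IsEmpty {γ : List A // γ.length = n ∧ α.1 <+: γ} :=
                ⟨fun γ => hl (by rw [← γ.2.1]; exact γ.2.2.length_le)⟩
              rw [tsum_empty]
              exact zero_le
    have hsplit : ∀ γ : List A,
        ({γ : List A | γ.length = n ∧ β <+: γ}).indicator (strProb P) γ ≤
        (Tset D n).indicator (strProb P) γ +
        ({γ : List A | γ.length = n ∧ β <+: γ ∧ ∃ δ ∈ D, δ <+: γ}).indicator
          (strProb P) γ := by
      intro γ
      by_cases hγ : γ ∈ {γ : List A | γ.length = n ∧ β <+: γ}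
      · rw [Set.indicator_of_mem hγ]
        by_cases hpre : ∃ δ ∈ D, δ <+: γ
        · refine le_add_left ?_
          have hm2 : γ ∈ ({γ : List A | γ.length = n ∧ β <+: γ ∧ ∃ δ ∈ D, δ <+: γ} :
              Set (List A)) := ⟨hγ.1, hγ.2, hpre⟩
          rw [Set.indicator_of_mem hm2]
        · have hT : γ ∈ Tset D n := ⟨hγ.1, fun δ hδ hp => hpre ⟨δ, hδ, hp⟩⟩
          refine le_add_right ?_
          rw [Set.indicator_of_mem hT]
      · rw [Set.indicator_of_notMem hγ]
        exact zero_le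
    calc ∑' γ : {γ : List A // γ.length = n ∧ β <+: γ}, strProb P γ.1
        = ∑' γ : List A,
            ({γ : List A | γ.length = n ∧ β <+: γ}).indicator (strProb P) γ :=
          tsum_subtype _ _
      _ ≤ ∑' γ : List A, ((Tset D n).indicator (strProb P) γ +
            ({γ : List A | γ.length = n ∧ β <+: γ ∧ ∃ δ ∈ D, δ <+: γ}).indicator
              (strProb P) γ) := ENNReal.tsum_le_tsum hsplit
      _ = (∑' γ : Tset D n, strProb P γ.1) +
            ∑' γ : {γ : List A | γ.length = n ∧ β <+: γ ∧ ∃ δ ∈ D, δ <+: γ},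
              strProb P γ.1 := by
          rw [ENNReal.tsum_add, ← tsum_subtype, ← tsum_subtype]
      _ ≤ (∑' γ : Tset D n, strProb P γ.1) + S := add_le_add_right hE' _
  have htend : Tendsto (fun n => (∑' γ : Tset D n, strProb P γ.1) + S) atTop
      (nhds (0 + S)) := (tendsto_tsum_Tset_zero P D hasc).add tendsto_const_nhds
  rw [zero_add] at htend
  exact ge_of_tendsto htend (eventually_atTop.mpr ⟨m, hstep⟩)

lemma entTerm_le_tsum {ι : Type*} {p : ℝ≥0∞} {f : ι → ℝ≥0∞} (hp : p ≤ 1)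
    (hf : ∀ i, f i ≤ p) (hsum : p ≤ ∑' i, f i) :
    entTerm p ≤ ∑' i, entTerm (f i) := by
  rcases eq_or_ne p 0 with rfl | hp0
  · simp [entTerm]
  have hpt : p ≠ ⊤ := (lt_of_le_of_lt hp ENNReal.one_lt_top).ne
  have hpR : 0 < p.toReal := ENNReal.toReal_pos hp0 hpt
  have hent : ∀ q : ℝ≥0∞, q ≠ ⊤ →
      entTerm q = q * ENNReal.ofReal (-(Real.logb 2 q.toReal)) := by
    intro q hq
    rw [entTerm, ← mul_neg, ENNReal.ofReal_mul ENNReal.toReal_nonneg,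
      ENNReal.ofReal_toReal hq]
  calc entTerm p = p * ENNReal.ofReal (-(Real.logb 2 p.toReal)) := hent p hpt
    _ ≤ (∑' i, f i) * ENNReal.ofReal (-(Real.logb 2 p.toReal)) :=
        mul_le_mul_left hsum _
    _ = ∑' i, f i * ENNReal.ofReal (-(Real.logb 2 p.toReal)) :=
        ENNReal.tsum_mul_right.symm
    _ ≤ ∑' i, entTerm (f i) := by
        refine ENNReal.tsum_le_tsum fun i => ?_
        rcases eq_or_ne (f i) 0 with h0 | h0
        · simp [h0, entTerm]
        · have hft : f i ≠ ⊤ := (lt_of_le_of_lt ((hf i).trans hp)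
            ENNReal.one_lt_top).ne
          rw [hent (f i) hft]
          refine mul_le_mul_right (ENNReal.ofReal_le_ofReal (neg_le_neg ?_)) _
          exact Real.logb_le_logb_of_le (by norm_num)
            (ENNReal.toReal_pos h0 hft) (ENNReal.toReal_mono hpt (hf i))

/-- The equivalence between the fibered decomposition of `{α ∈ D | m ≤ |α|}`
over `Dperp D m` and the set itself. -/
def fiberEquiv {A : Type*} (D : Set (List A)) (hprop : IsProper D) (m : ℕ) :
    (Σ β : Dperp D m, {α : List A | α ∈ D ∧ m ≤ α.length ∧ β.1 <+: α}) ≃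
      {α ∈ D | m ≤ α.length} where
  toFun σ := ⟨σ.2.1, σ.2.2.1, σ.2.2.2.1⟩
  invFun α := by
    refine ⟨⟨α.1.take m, ?_⟩, ⟨α.1, α.2.1, α.2.2, List.take_prefix _ _⟩⟩
    by_cases hcase : α.1.take m = α.1
    · left
      refine ⟨by rw [hcase]; exact α.2.1, ?_⟩
      rw [List.length_take]
      exact min_eq_left α.2.2
    · right
      refine ⟨by rw [List.length_take]; exact min_eq_left α.2.2, ?_⟩
      intro δ hδ hp
      have hδα : δ <+: α.1 := hp.trans (List.take_prefix _ _)
      have hδeq : δ = α.1 := hprop δ hδ α.1 α.2.1 hδα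
      rw [hδeq] at hp
      have h1 : α.1.length ≤ (α.1.take m).length := hp.length_le
      rw [List.length_take] at h1
      exact hcase (List.take_of_length_le (h1.trans (min_le_left _ _)))
  left_inv σ := by
    obtain ⟨⟨β, hβ⟩, ⟨α, hα⟩⟩ := σ
    have hlen : β.length = m := hβ.elim (fun h => h.2) (fun h => h.1)
    have hpre : β <+: α := hα.2.2
    have hβα : β = α.take m := by
      conv_lhs => rw [List.prefix_iff_eq_take.mp hpre]
      rw [hlen]
    subst hβα
    rfl
  right_inv α := rfl

end AuxProofs

/-- If `D` is proper and almost surely complete then, for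
every positive integer `m`,
`-∑_{α∈D, |α|≥m} P(α) log₂ P(α) ≥ -∑_{β ∈ D_m^⊥} P(β) log₂ P(β)`. -/
theorem dictEntropy_Dperp_le {A : Type*} [Countable A] (P : PMF A)
    (D : Set (List A)) (hdict : IsDictionary D) (hprop : IsProper D)
    (hasc : IsASC P D) (m : ℕ) (hm : 0 < m) :
    dictEntropy P (Dperp D m) ≤ dictEntropy P {α ∈ D | m ≤ α.length} := by
  classical
  have perβ : ∀ β : Dperp D m, entTerm (strProb P β.1) ≤
      ∑' α : {α : List A | α ∈ D ∧ m ≤ α.length ∧ β.1 <+: α},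
        entTerm (strProb P α.1) := by
    intro β
    rcases β.2 with hD | hT
    · have hmem : β.1 ∈ {α : List A | α ∈ D ∧ m ≤ α.length ∧ β.1 <+: α} :=
        ⟨hD.1, hD.2.ge, List.prefix_refl _⟩
      exact ENNReal.le_tsum (f := fun α : {α : List A | α ∈ D ∧ m ≤ α.length ∧ β.1 <+: α} =>
        entTerm (strProb P α.1)) ⟨β.1, hmem⟩
    · exact entTerm_le_tsum (strProb_le_one P β.1)
        (fun α => strProb_le_of_prefix P α.2.2.2)
        (strProb_le_fiber P hprop hasc hT)
  calc dictEntropy P (Dperp D m)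
      ≤ ∑' β : Dperp D m, ∑' α : {α : List A | α ∈ D ∧ m ≤ α.length ∧ β.1 <+: α},
          entTerm (strProb P α.1) := ENNReal.tsum_le_tsum perβ
    _ = ∑' σ : Σ β : Dperp D m, {α : List A | α ∈ D ∧ m ≤ α.length ∧ β.1 <+: α},
          entTerm (strProb P σ.2.1) :=
        (ENNReal.tsum_sigma' (fun σ : Σ β : Dperp D m,
          {α : List A | α ∈ D ∧ m ≤ α.length ∧ β.1 <+: α} =>
            entTerm (strProb P σ.2.1))).symm
    _ = dictEntropy P {α ∈ D | m ≤ α.length} := by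
        rw [dictEntropy, ← Equiv.tsum_eq (fiberEquiv D hprop m)
          (fun α => entTerm (strProb P α.1))]
        exact tsum_congr fun σ => rfl
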